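/- Let α = 1 and β > 0, let φ be an analytic self-map of the open unit disk D, and let g be analytic on D. Then the operator V_gC_φ, defined by (V_gC_φ f)(z) = ∫₀^z f'(φ(ξ)) g(ξ) dξ, is bounded from Z^1 to Z^β if and only if sup_{z∈D} (1−|z|²)^β |g(z)φ'(z)| / (1−|φ(z)|²) < ∞ and sup_{z∈D} (1−|z|²)^β log(2/(1−|φ(z)|²)) |g'(z)| < ∞. -/

import Mathlib

noncomputable section

/-- The open unit disk in the complex plane. -/
def uD : Set ℂ := Metric.ball 0 1

/-- The Zygmund-type quantity `(1-|z|^2)^a * |f''(z)|`. -/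
def zygS (a : ℝ) (f : ℂ → ℂ) (z : ℂ) : ℝ := (1 - ‖z‖ ^ 2) ^ a * ‖deriv (deriv f) z‖

/-- Membership in the Zygmund-type space `Z^a`. -/
def memZ (a : ℝ) (f : ℂ → ℂ) : Prop :=
  AnalyticOn ℂ f uD ∧ ∃ M : ℝ, ∀ z ∈ uD, zygS a f z ≤ M

/-- The Zygmund-type norm `‖f‖_{Z^a} = |f 0| + |f' 0| + sup_{z ∈ D} (1-|z|^2)^a |f''(z)|`. -/
def zNorm (a : ℝ) (f : ℂ → ℂ) : ℝ := ‖f 0‖ + ‖deriv f 0‖ + sSup (zygS a f '' uD)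

/-- Membership in the weighted space `H^∞_{v_b}` (for `u` analytic on `uD`). -/
def memHv (b : ℝ) (u : ℂ → ℂ) : Prop :=
  ∃ M : ℝ, ∀ z ∈ uD, (1 - ‖z‖ ^ 2) ^ b * ‖u z‖ ≤ M

/-- `T` is a bounded operator from `Z^a` to `Z^b`. -/
def boundedOp (a b : ℝ) (T : (ℂ → ℂ) → ℂ → ℂ) : Prop :=
  (∀ f, memZ a f → memZ b (T f)) ∧
    ∃ C > 0, ∀ f, memZ a f → zNorm b (T f) ≤ C * zNorm a f

/-- `(V_g C_φ f)(z) = ∫₀^z f'(φ(ξ)) g(ξ) dξ`, parametrized along the segment from `0` to `z`. -/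
def VgCphi (g φ : ℂ → ℂ) (f : ℂ → ℂ) : ℂ → ℂ :=
  fun z => ∫ t in (0:ℝ)..1, z * (deriv f (φ ((t : ℂ) * z)) * g ((t : ℂ) * z))

open Metric Set intervalIntegral

lemma mem_uD {z : ℂ} : z ∈ uD ↔ ‖z‖ < 1 := by
  simp [uD, mem_ball, dist_eq_norm]

lemma uD_open : IsOpen uD := isOpen_ball

lemma zero_mem_uD : (0:ℂ) ∈ uD := by simp [mem_uD]

lemma one_sub_sq_pos {z : ℂ} (hz : z ∈ uD) : 0 < 1 - ‖z‖^2 := by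
  rw [mem_uD] at hz
  nlinarith [norm_nonneg z]

lemma smul_mem_uD {z : ℂ} (hz : z ∈ uD) {t : ℝ} (ht : t ∈ Set.Icc (0:ℝ) 1) :
    (t:ℂ) * z ∈ uD := by
  rw [mem_uD] at hz ⊢
  rw [norm_mul, Complex.norm_real, Real.norm_eq_abs, abs_of_nonneg ht.1]
  calc t * ‖z‖ ≤ 1 * ‖z‖ := by nlinarith [norm_nonneg z, ht.2]
  _ < 1 := by simpa using hz

/-- Derivative of the parametrized primitive. -/
lemma hasDerivAt_primitive {h : ℂ → ℂ} (hh : AnalyticOnNhd ℂ h uD) {z₀ : ℂ} (hz : z₀ ∈ uD) :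
    HasDerivAt (fun z => ∫ t in (0:ℝ)..1, z * h ((t:ℂ) * z)) (h z₀) z₀ := by
  rw [mem_uD] at hz
  set r : ℝ := (1 + ‖z₀‖)/2 with hr
  have hr1 : r < 1 := by rw [hr]; linarith
  have hz0r : ‖z₀‖ < r := by rw [hr]; linarith [norm_nonneg z₀]
  have hr0 : 0 < r := lt_of_le_of_lt (norm_nonneg z₀) hz0r
  set K : Set ℂ := Metric.closedBall (0:ℂ) r with hK
  have hKD : K ⊆ uD := fun x hx => by
    rw [mem_uD]
    exact lt_of_le_of_lt (by simpa [hK, dist_eq_norm] using hx) hr1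
  have hKc : IsCompact K := isCompact_closedBall _ _
  have hcont : ContinuousOn h K := (hh.continuousOn).mono hKD
  have hcont' : ContinuousOn (deriv h) K := (hh.deriv.continuousOn).mono hKD
  obtain ⟨C₁, hC₁⟩ := hKc.exists_bound_of_continuousOn hcont
  obtain ⟨C₂, hC₂⟩ := hKc.exists_bound_of_continuousOn hcont'
  set ε : ℝ := r - ‖z₀‖ with hε
  have hε0 : 0 < ε := by rwa [hε, sub_pos]
  have hball : ∀ x ∈ Metric.ball z₀ ε, ∀ t ∈ Set.Icc (0:ℝ) 1, (t:ℂ) * x ∈ K := by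
    intro x hx t ht
    have hxr : ‖x‖ < r := by
      have h1 : ‖x‖ - ‖z₀‖ ≤ ‖x - z₀‖ := norm_sub_norm_le x z₀
      have h2 := mem_ball_iff_norm.mp hx
      rw [hε] at *
      linarith
    simp only [hK, Metric.mem_closedBall, dist_eq_norm, sub_zero]
    rw [norm_mul, Complex.norm_real, Real.norm_eq_abs, abs_of_nonneg ht.1]
    nlinarith [norm_nonneg x, ht.2, ht.1]
  -- the statement via dominated convergence
  have key := intervalIntegral.hasDerivAt_integral_of_dominated_loc_of_deriv_le
    (F := fun x t => x * h ((t:ℂ) * x))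
    (F' := fun x t => h ((t:ℂ)*x) + x * (deriv h ((t:ℂ)*x) * (t:ℂ)))
    (x₀ := z₀) (a := 0) (b := 1) (μ := MeasureTheory.volume)
    (bound := fun _ => |C₁| + |C₂|) (Metric.ball_mem_nhds z₀ hε0)
    ?_ ?_ ?_ ?_ ?_ ?_
  · -- conclusion
    obtain ⟨hint, hder⟩ := key
    have hft : ∀ t ∈ Set.uIcc (0:ℝ) 1, HasDerivAt
        (fun s : ℝ => (s:ℂ) * h ((s:ℂ)*z₀))
        (h ((t:ℂ)*z₀) + z₀ * (deriv h ((t:ℂ)*z₀) * (t:ℂ))) t := by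
      intro t ht
      rw [Set.uIcc_of_le zero_le_one] at ht
      have htz : (t:ℂ)*z₀ ∈ uD := hKD (hball z₀ (Metric.mem_ball_self hε0) t ht)
      have hre : HasDerivAt (fun s : ℝ => (s:ℂ)) 1 t := by
        simpa using (hasDerivAt_id t).ofReal_comp
      have hinner : HasDerivAt (fun s : ℝ => (s:ℂ)*z₀) z₀ t := by
        simpa using hre.mul_const z₀
      have hd : HasDerivAt h (deriv h ((t:ℂ)*z₀)) ((t:ℂ)*z₀) :=
        ((hh _ htz).differentiableAt).hasDerivAt
      have hcomp : HasDerivAt (fun s : ℝ => h ((s:ℂ)*z₀)) (z₀ • deriv h ((t:ℂ)*z₀)) t :=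
        HasDerivAt.scomp t hd hinner
      have := hre.mul hcomp
      refine this.congr_deriv (Eq.symm ?_)
      simp [smul_eq_mul]
      ring
    have heq := intervalIntegral.integral_eq_sub_of_hasDerivAt hft hint
    rw [heq] at hder
    simpa using hder
  · -- measurability of F x near z₀
    apply Filter.eventually_of_mem (Metric.ball_mem_nhds z₀ hε0)
    intro x hx
    have hc : ContinuousOn (fun t : ℝ => x * h ((t:ℂ) * x)) (Set.Icc 0 1) := by
      apply continuousOn_const.mul
      apply (hcont.mono (fun y hy => hy)).comp
        ((Complex.continuous_ofReal.mul continuous_const).continuousOn)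
      intro t ht
      exact hball x hx t ht
    exact (hc.mono (by rw [Set.uIoc_of_le zero_le_one]; exact Set.Ioc_subset_Icc_self)).aestronglyMeasurable measurableSet_uIoc
  · -- integrability of F z₀
    apply ContinuousOn.intervalIntegrable
    rw [Set.uIcc_of_le zero_le_one]
    apply continuousOn_const.mul
    apply hcont.comp ((Complex.continuous_ofReal.mul continuous_const).continuousOn)
    intro t ht
    exact hball z₀ (Metric.mem_ball_self hε0) t ht
  · -- measurability of F' z₀
    have hc : ContinuousOn (fun t : ℝ => h ((t:ℂ)*z₀) + z₀ * (deriv h ((t:ℂ)*z₀) * (t:ℂ))) (Set.Icc 0 1) := by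
      have hm : ContinuousOn (fun t : ℝ => (t:ℂ)*z₀) (Set.Icc 0 1) :=
        (Complex.continuous_ofReal.mul continuous_const).continuousOn
      have hmt : Set.MapsTo (fun t : ℝ => (t:ℂ)*z₀) (Set.Icc 0 1) K :=
        fun t ht => hball z₀ (Metric.mem_ball_self hε0) t ht
      exact (hcont.comp hm hmt).add (continuousOn_const.mul
        ((hcont'.comp hm hmt).mul Complex.continuous_ofReal.continuousOn))
    exact (hc.mono (by rw [Set.uIoc_of_le zero_le_one]; exact Set.Ioc_subset_Icc_self)).aestronglyMeasurable measurableSet_uIoc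
  · -- bound
    apply Filter.Eventually.of_forall
    intro t ht x hx
    have ht' : t ∈ Set.Icc (0:ℝ) 1 := by
      rw [Set.uIoc_of_le zero_le_one] at ht
      exact Set.Ioc_subset_Icc_self ht
    have htx : (t:ℂ)*x ∈ K := hball x hx t ht'
    have h1 : ‖h ((t:ℂ)*x)‖ ≤ C₁ := hC₁ _ htx
    have h2 : ‖deriv h ((t:ℂ)*x)‖ ≤ C₂ := hC₂ _ htx
    have hx1 : ‖x‖ ≤ 1 := by
      have h1' : ‖x‖ - ‖z₀‖ ≤ ‖x - z₀‖ := norm_sub_norm_le x z₀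
      have h2' := mem_ball_iff_norm.mp hx
      rw [hε] at h2'
      linarith
    calc ‖h ((t:ℂ)*x) + x * (deriv h ((t:ℂ)*x) * (t:ℂ))‖
        ≤ ‖h ((t:ℂ)*x)‖ + ‖x * (deriv h ((t:ℂ)*x) * (t:ℂ))‖ := norm_add_le _ _
      _ ≤ C₁ + ‖x‖ * (‖deriv h ((t:ℂ)*x)‖ * ‖(t:ℂ)‖) := by
          rw [norm_mul, norm_mul]
          gcongr
      _ ≤ |C₁| + |C₂| := by
          have htn : ‖(t:ℂ)‖ ≤ 1 := by
            rw [Complex.norm_real, Real.norm_eq_abs, abs_of_nonneg ht'.1]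
            exact ht'.2
          have h2' : ‖deriv h ((t:ℂ)*x)‖ ≤ |C₂| := h2.trans (le_abs_self _)
          have hb : ‖x‖ * (‖deriv h ((t:ℂ)*x)‖ * ‖(t:ℂ)‖) ≤ 1 * (|C₂| * 1) := by
            gcongr
          have l1 : C₁ ≤ |C₁| := le_abs_self _
          linarith
  · exact intervalIntegrable_const
  · -- differentiability in x
    apply Filter.Eventually.of_forall
    intro t ht x hx
    have ht' : t ∈ Set.Icc (0:ℝ) 1 := by
      rw [Set.uIoc_of_le zero_le_one] at ht
      exact Set.Ioc_subset_Icc_self ht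
    have htx : (t:ℂ)*x ∈ uD := hKD (hball x hx t ht')
    have hd : HasDerivAt h (deriv h ((t:ℂ)*x)) ((t:ℂ)*x) :=
      ((hh _ htx).differentiableAt).hasDerivAt
    have hinner : HasDerivAt (fun y : ℂ => (t:ℂ)*y) ((t:ℂ)) x := by
      simpa using (hasDerivAt_id x).const_mul (t:ℂ)
    have hcomp : HasDerivAt (fun y : ℂ => h ((t:ℂ)*y)) (deriv h ((t:ℂ)*x) * (t:ℂ)) x :=
      hd.comp x hinner
    exact ((hasDerivAt_id' x).mul hcomp).congr_deriv (by simp)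

lemma memZ.aonhd {a : ℝ} {f : ℂ → ℂ} (hf : memZ a f) : AnalyticOnNhd ℂ f uD :=
  (uD_open.analyticOn_iff_analyticOnNhd).mp hf.1

lemma zygS_nonneg {a : ℝ} {f : ℂ → ℂ} {z : ℂ} (hz : z ∈ uD) : 0 ≤ zygS a f z :=
  mul_nonneg (Real.rpow_nonneg (le_of_lt (one_sub_sq_pos hz)) a) (norm_nonneg _)

lemma zygS_le_sSup {a : ℝ} {f : ℂ → ℂ} (hf : ∃ M : ℝ, ∀ z ∈ uD, zygS a f z ≤ M)
    {z : ℂ} (hz : z ∈ uD) : zygS a f z ≤ sSup (zygS a f '' uD) := by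
  obtain ⟨M, hM⟩ := hf
  apply le_csSup
  · exact ⟨M, by rintro x ⟨y, hy, rfl⟩; exact hM y hy⟩
  · exact Set.mem_image_of_mem _ hz

lemma sSup_zygS_nonneg {a : ℝ} {f : ℂ → ℂ} (hf : ∃ M : ℝ, ∀ z ∈ uD, zygS a f z ≤ M) :
    0 ≤ sSup (zygS a f '' uD) :=
  le_trans (zygS_nonneg zero_mem_uD) (zygS_le_sSup hf zero_mem_uD)

lemma sSup_zygS_le {a M : ℝ} {f : ℂ → ℂ} (hM0 : 0 ≤ M) (h : ∀ z ∈ uD, zygS a f z ≤ M) :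
    sSup (zygS a f '' uD) ≤ M :=
  Real.sSup_le (by rintro x ⟨y, hy, rfl⟩; exact h y hy) hM0

lemma zygS_le_zNorm {a : ℝ} {f : ℂ → ℂ} (hf : memZ a f) {z : ℂ} (hz : z ∈ uD) :
    zygS a f z ≤ zNorm a f := by
  have := zygS_le_sSup hf.2 hz
  have h1 := norm_nonneg (f 0)
  have h2 := norm_nonneg (deriv f 0)
  unfold zNorm; linarith

lemma zNorm_nonneg {a : ℝ} {f : ℂ → ℂ} (hf : memZ a f) : 0 ≤ zNorm a f := by
  have := sSup_zygS_nonneg hf.2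
  have h1 := norm_nonneg (f 0)
  have h2 := norm_nonneg (deriv f 0)
  unfold zNorm; linarith

lemma norm_f0_le_zNorm {a : ℝ} (f : ℂ → ℂ) (hf : memZ a f) : ‖f 0‖ ≤ zNorm a f := by
  have := sSup_zygS_nonneg hf.2
  have h2 := norm_nonneg (deriv f 0)
  unfold zNorm; linarith

lemma norm_df0_le_zNorm {a : ℝ} (f : ℂ → ℂ) (hf : memZ a f) : ‖deriv f 0‖ ≤ zNorm a f := by
  have := sSup_zygS_nonneg hf.2
  have h1 := norm_nonneg (f 0)
  unfold zNorm; linarith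

section ops

variable {φ g : ℂ → ℂ} (hφ : AnalyticOnNhd ℂ φ uD) (hφm : Set.MapsTo φ uD uD)
  (hg : AnalyticOnNhd ℂ g uD)

include hφ hφm hg

lemma aonhd_h {f : ℂ → ℂ} (hf : AnalyticOnNhd ℂ f uD) :
    AnalyticOnNhd ℂ (fun ξ => deriv f (φ ξ) * g ξ) uD :=
  ((hf.deriv.comp hφ hφm).mul hg)

lemma hasDerivAt_T {f : ℂ → ℂ} (hf : AnalyticOnNhd ℂ f uD) {z : ℂ} (hz : z ∈ uD) :
    HasDerivAt (VgCphi g φ f) (deriv f (φ z) * g z) z :=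
  hasDerivAt_primitive (aonhd_h hφ hφm hg hf) hz

lemma deriv_T {f : ℂ → ℂ} (hf : AnalyticOnNhd ℂ f uD) {z : ℂ} (hz : z ∈ uD) :
    deriv (VgCphi g φ f) z = deriv f (φ z) * g z :=
  (hasDerivAt_T hφ hφm hg hf hz).deriv

lemma deriv2_T {f : ℂ → ℂ} (hf : AnalyticOnNhd ℂ f uD) {z : ℂ} (hz : z ∈ uD) :
    deriv (deriv (VgCphi g φ f)) z =
      deriv (deriv f) (φ z) * deriv φ z * g z + deriv f (φ z) * deriv g z := by
  have hev : deriv (VgCphi g φ f) =ᶠ[nhds z] fun ξ => deriv f (φ ξ) * g ξ := by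
    apply Filter.eventuallyEq_of_mem (uD_open.mem_nhds hz)
    intro ξ hξ
    exact deriv_T hφ hφm hg hf hξ
  rw [hev.deriv_eq]
  have hdφ : HasDerivAt φ (deriv φ z) z := (hφ z hz).differentiableAt.hasDerivAt
  have hdg : HasDerivAt g (deriv g z) z := (hg z hz).differentiableAt.hasDerivAt
  have hdf' : HasDerivAt (deriv f) (deriv (deriv f) (φ z)) (φ z) :=
    ((hf.deriv) _ (hφm hz)).differentiableAt.hasDerivAt
  have hcomp : HasDerivAt (fun ξ => deriv f (φ ξ)) (deriv (deriv f) (φ z) * deriv φ z) z :=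
    hdf'.comp z hdφ
  exact (hcomp.mul hdg).deriv

omit hφ hφm hg in
lemma T_zero (f : ℂ → ℂ) : VgCphi g φ f 0 = 0 := by
  simp [VgCphi]

lemma T_aonhd {f : ℂ → ℂ} (hf : AnalyticOnNhd ℂ f uD) :
    AnalyticOnNhd ℂ (VgCphi g φ f) uD := by
  apply DifferentiableOn.analyticOnNhd _ uD_open
  intro z hz
  exact (hasDerivAt_T hφ hφm hg hf hz).differentiableAt.differentiableWithinAt

end ops

/-! Growth estimates for functions in `Z^1`. -/

lemma log_two_le_s {w : ℂ} (hw : w ∈ uD) : Real.log 2 ≤ Real.log (2 / (1 - ‖w‖ ^ 2)) := by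
  have h1 : 0 < 1 - ‖w‖^2 := one_sub_sq_pos hw
  apply Real.log_le_log (by norm_num)
  rw [le_div_iff₀ h1]
  nlinarith [norm_nonneg w]

lemma s_pos {w : ℂ} (hw : w ∈ uD) : 0 < Real.log (2 / (1 - ‖w‖ ^ 2)) :=
  lt_of_lt_of_le (Real.log_pos (by norm_num)) (log_two_le_s hw)

lemma zygS_one {f : ℂ → ℂ} {z : ℂ} : zygS 1 f z = (1 - ‖z‖ ^ 2) * ‖deriv (deriv f) z‖ := by
  unfold zygS
  rw [Real.rpow_one]

lemma second_deriv_bound {f : ℂ → ℂ} (hf : memZ 1 f) {z : ℂ} (hz : z ∈ uD) :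
    (1 - ‖z‖ ^ 2) * ‖deriv (deriv f) z‖ ≤ zNorm 1 f := by
  rw [← zygS_one]
  exact zygS_le_zNorm hf hz

lemma first_deriv_bound {f : ℂ → ℂ} (hf : memZ 1 f) {w : ℂ} (hw : w ∈ uD) :
    ‖deriv f w‖ ≤ (1 + 1/Real.log 2) * zNorm 1 f * Real.log (2 / (1 - ‖w‖ ^ 2)) := by
  have hfa := hf.aonhd
  have hN := zNorm_nonneg hf
  set N := zNorm 1 f with hNdef
  have hw1 : ‖w‖ < 1 := mem_uD.mp hw
  -- FTC for deriv f along the segment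
  have hseg : ∀ t ∈ Set.Icc (0:ℝ) 1, (t:ℂ) * w ∈ uD := fun t ht => smul_mem_uD hw ht
  have hft : ∀ t ∈ Set.uIcc (0:ℝ) 1, HasDerivAt (fun s : ℝ => deriv f ((s:ℂ)*w))
      (w • deriv (deriv f) ((t:ℂ)*w)) t := by
    intro t ht
    rw [Set.uIcc_of_le zero_le_one] at ht
    have hre : HasDerivAt (fun s : ℝ => (s:ℂ)) 1 t := by
      simpa using (hasDerivAt_id t).ofReal_comp
    have hinner : HasDerivAt (fun s : ℝ => (s:ℂ)*w) w t := by simpa using hre.mul_const w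
    have hd : HasDerivAt (deriv f) (deriv (deriv f) ((t:ℂ)*w)) ((t:ℂ)*w) :=
      ((hfa.deriv) _ (hseg t ht)).differentiableAt.hasDerivAt
    exact HasDerivAt.scomp t hd hinner
  have hcont2 : ContinuousOn (fun t : ℝ => w • deriv (deriv f) ((t:ℂ)*w)) (Set.Icc 0 1) := by
    refine ContinuousOn.const_smul (g := fun t : ℝ => deriv (deriv f) ((t:ℂ)*w)) ?_ w
    apply (hfa.deriv.deriv.continuousOn).comp
      ((Complex.continuous_ofReal.mul continuous_const).continuousOn)
    exact hseg
  have hint : IntervalIntegrable (fun t : ℝ => w • deriv (deriv f) ((t:ℂ)*w))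
      MeasureTheory.volume 0 1 := by
    apply ContinuousOn.intervalIntegrable
    rwa [Set.uIcc_of_le zero_le_one]
  have hftc := intervalIntegral.integral_eq_sub_of_hasDerivAt hft hint
  simp only [Complex.ofReal_one, Complex.ofReal_zero, one_mul, zero_mul] at hftc
  -- bound the integral
  have hb : ∀ t ∈ Set.Icc (0:ℝ) 1, ‖w • deriv (deriv f) ((t:ℂ)*w)‖ ≤ N * ‖w‖ / (1 - t * ‖w‖) := by
    intro t ht
    have htw : (t:ℂ)*w ∈ uD := hseg t ht
    have h1 : 0 < 1 - ‖(t:ℂ)*w‖^2 := one_sub_sq_pos htw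
    have hnorm : ‖(t:ℂ)*w‖ = t * ‖w‖ := by
      rw [norm_mul, Complex.norm_real, Real.norm_eq_abs, abs_of_nonneg ht.1]
    have h2 : 0 < 1 - t * ‖w‖ := by
      rw [hnorm] at h1
      nlinarith [mul_nonneg ht.1 (norm_nonneg w)]
    have h3 : 1 - t*‖w‖ ≤ 1 - ‖(t:ℂ)*w‖^2 := by
      rw [hnorm]
      nlinarith [mul_nonneg ht.1 (norm_nonneg w), ht.2, norm_nonneg w, hw1]
    have h4 := second_deriv_bound hf htw
    rw [← hNdef] at h4
    rw [norm_smul]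
    rw [div_eq_mul_inv]
    have h5 : ‖deriv (deriv f) ((t:ℂ)*w)‖ ≤ N / (1 - t*‖w‖) := by
      rw [le_div_iff₀ h2]
      calc ‖deriv (deriv f) ((t:ℂ)*w)‖ * (1 - t*‖w‖)
          ≤ ‖deriv (deriv f) ((t:ℂ)*w)‖ * (1 - ‖(t:ℂ)*w‖^2) := by
            gcongr
        _ ≤ N := by rw [mul_comm]; exact h4
    calc ‖w‖ * ‖deriv (deriv f) ((t:ℂ)*w)‖ ≤ ‖w‖ * (N / (1 - t*‖w‖)) := by gcongr
      _ = N * ‖w‖ * (1 - t*‖w‖)⁻¹ := by field_simp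
  -- the comparison integral
  have hbc : ContinuousOn (fun t : ℝ => N * ‖w‖ / (1 - t * ‖w‖)) (Set.Icc 0 1) := by
    apply ContinuousOn.div continuousOn_const
    · exact (continuousOn_const.sub (continuousOn_id.mul continuousOn_const))
    · intro t ht
      have : (0:ℝ) < 1 - t * ‖w‖ := by
        nlinarith [mul_nonneg ht.1 (norm_nonneg w), ht.2, norm_nonneg w, hw1]
      linarith
  have hbint : IntervalIntegrable (fun t : ℝ => N * ‖w‖ / (1 - t * ‖w‖))
      MeasureTheory.volume 0 1 := by
    apply ContinuousOn.intervalIntegrable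
    rwa [Set.uIcc_of_le zero_le_one]
  have hbnn : (0:ℝ) ≤ ∫ t in (0:ℝ)..1, N * ‖w‖ / (1 - t * ‖w‖) := by
    apply intervalIntegral.integral_nonneg zero_le_one
    intro t ht
    have h2 : (0:ℝ) < 1 - t * ‖w‖ := by
      nlinarith [mul_nonneg ht.1 (norm_nonneg w), ht.2, norm_nonneg w, hw1]
    have := mul_nonneg hN (norm_nonneg w)
    positivity
  have hIbound : ‖∫ t in (0:ℝ)..1, w • deriv (deriv f) ((t:ℂ)*w)‖
      ≤ ∫ t in (0:ℝ)..1, N * ‖w‖ / (1 - t * ‖w‖) := by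
    have := intervalIntegral.norm_integral_le_of_norm_le
      (f := fun t : ℝ => w • deriv (deriv f) ((t:ℂ)*w))
      (g := fun t : ℝ => N * ‖w‖ / (1 - t * ‖w‖)) zero_le_one ?_ hbint
    · exact this
    · apply Filter.Eventually.of_forall
      intro t ht
      exact hb t (Set.Ioc_subset_Icc_self ht)
  -- evaluate the comparison integral
  have hcomp : (∫ t in (0:ℝ)..1, N * ‖w‖ / (1 - t * ‖w‖)) = N * (-Real.log (1 - ‖w‖)) := by
    have hprim : ∀ t ∈ Set.uIcc (0:ℝ) 1, HasDerivAt (fun t : ℝ => -N * Real.log (1 - t * ‖w‖))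
        (N * ‖w‖ / (1 - t * ‖w‖)) t := by
      intro t ht
      rw [Set.uIcc_of_le zero_le_one] at ht
      have h2 : (0:ℝ) < 1 - t * ‖w‖ := by
        nlinarith [mul_nonneg ht.1 (norm_nonneg w), ht.2, norm_nonneg w, hw1]
      have hinner : HasDerivAt (fun t : ℝ => 1 - t * ‖w‖) (-‖w‖) t := by
        simpa using ((hasDerivAt_id' t).mul_const ‖w‖).const_sub (1:ℝ)
      have hlog := (Real.hasDerivAt_log (ne_of_gt h2)).comp t hinner
      have := hlog.const_mul (-N)
      refine this.congr_deriv (Eq.symm ?_)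
      ring
    rw [intervalIntegral.integral_eq_sub_of_hasDerivAt hprim hbint]
    simp
  -- put it together
  have key : ‖deriv f w - deriv f 0‖ ≤ N * (-Real.log (1 - ‖w‖)) := by
    rw [← hftc, ← hcomp] at *
    exact hIbound
  have hlog1 : -Real.log (1 - ‖w‖) ≤ Real.log (2 / (1 - ‖w‖ ^ 2)) := by
    have h1 : (0:ℝ) < 1 - ‖w‖ := by linarith
    have h2 : 0 < 1 - ‖w‖^2 := by nlinarith [norm_nonneg w]
    rw [← Real.log_inv]
    apply Real.log_le_log (by positivity)
    rw [inv_eq_one_div, div_le_div_iff₀ h1 h2]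
    nlinarith [norm_nonneg w]
  have hlog2 : Real.log 2 ≤ Real.log (2 / (1 - ‖w‖ ^ 2)) := log_two_le_s hw
  have hlog2' : (0:ℝ) < Real.log 2 := Real.log_pos (by norm_num)
  have hdf0 : ‖deriv f 0‖ ≤ N := norm_df0_le_zNorm f hf
  have htotal : ‖deriv f w‖ ≤ ‖deriv f 0‖ + N * (-Real.log (1 - ‖w‖)) := by
    have := norm_sub_norm_le (deriv f w) (deriv f 0)
    linarith [key]
  have hNterm : N ≤ (1/Real.log 2) * N * Real.log (2 / (1 - ‖w‖ ^ 2)) := by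
    rw [div_mul_eq_mul_div, one_mul, div_mul_eq_mul_div, le_div_iff₀ hlog2']
    gcongr
  have hlogterm : N * (-Real.log (1 - ‖w‖)) ≤ N * Real.log (2 / (1 - ‖w‖ ^ 2)) := by
    apply mul_le_mul_of_nonneg_left hlog1 hN
  calc ‖deriv f w‖ ≤ ‖deriv f 0‖ + N * (-Real.log (1 - ‖w‖)) := htotal
    _ ≤ N + N * Real.log (2 / (1 - ‖w‖ ^ 2)) := by linarith [hdf0]
    _ ≤ (1/Real.log 2) * N * Real.log (2 / (1 - ‖w‖ ^ 2)) + N * Real.log (2 / (1 - ‖w‖ ^ 2)) := by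
        linarith [hNterm]
    _ = (1 + 1/Real.log 2) * N * Real.log (2 / (1 - ‖w‖ ^ 2)) := by ring

/-! Generic helpers for computing derivatives and membership. -/

lemma deriv2_eq_on {f p q : ℂ → ℂ} (h1 : ∀ z ∈ uD, HasDerivAt f (p z) z)
    (h2 : ∀ z ∈ uD, HasDerivAt p (q z) z) {z : ℂ} (hz : z ∈ uD) :
    deriv (deriv f) z = q z := by
  have hev : deriv f =ᶠ[nhds z] p :=
    Filter.eventuallyEq_of_mem (uD_open.mem_nhds hz) (fun ξ hξ => (h1 ξ hξ).deriv)
  rw [hev.deriv_eq]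
  exact (h2 z hz).deriv

lemma memZ_of {a M : ℝ} {f p q : ℂ → ℂ} (h1 : ∀ z ∈ uD, HasDerivAt f (p z) z)
    (h2 : ∀ z ∈ uD, HasDerivAt p (q z) z)
    (hM : ∀ z ∈ uD, (1 - ‖z‖ ^ 2) ^ a * ‖q z‖ ≤ M) : memZ a f := by
  constructor
  · apply AnalyticOnNhd.analyticOn
    apply DifferentiableOn.analyticOnNhd _ uD_open
    exact fun z hz => (h1 z hz).differentiableAt.differentiableWithinAt
  · exact ⟨M, fun z hz => by unfold zygS; rw [deriv2_eq_on h1 h2 hz]; exact hM z hz⟩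

lemma zNorm_le_of {a M : ℝ} {f p q : ℂ → ℂ} (h1 : ∀ z ∈ uD, HasDerivAt f (p z) z)
    (h2 : ∀ z ∈ uD, HasDerivAt p (q z) z)
    (hM : ∀ z ∈ uD, (1 - ‖z‖ ^ 2) ^ a * ‖q z‖ ≤ M) (hM0 : 0 ≤ M) :
    zNorm a f ≤ ‖f 0‖ + ‖p 0‖ + M := by
  unfold zNorm
  have hd0 : deriv f 0 = p 0 := (h1 0 zero_mem_uD).deriv
  rw [hd0]
  have hsup : sSup (zygS a f '' uD) ≤ M := by
    apply sSup_zygS_le hM0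
    intro z hz
    unfold zygS
    rw [deriv2_eq_on h1 h2 hz]
    exact hM z hz
  linarith

/-! The sufficiency direction. -/

lemma backward {β : ℝ} (hβ : 0 < β) {φ g : ℂ → ℂ}
    (hφ : AnalyticOnNhd ℂ φ uD) (hφm : Set.MapsTo φ uD uD) (hg : AnalyticOnNhd ℂ g uD)
    (h1 : ∃ M : ℝ, ∀ z ∈ uD, (1 - ‖z‖ ^ 2) ^ β * ‖g z * deriv φ z‖ / (1 - ‖φ z‖ ^ 2) ^ (1:ℝ) ≤ M)
    (h2 : ∃ M : ℝ, ∀ z ∈ uD, (1 - ‖z‖ ^ 2) ^ β * Real.log (2 / (1 - ‖φ z‖ ^ 2)) * ‖deriv g z‖ ≤ M) :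
    boundedOp 1 β (VgCphi g φ) := by
  obtain ⟨M₁', hM₁⟩ := h1
  obtain ⟨M₂', hM₂⟩ := h2
  set M₁ : ℝ := max M₁' 0 with hM₁def
  set M₂ : ℝ := max M₂' 0 with hM₂def
  have hM₁0 : 0 ≤ M₁ := le_max_right _ _
  have hM₂0 : 0 ≤ M₂ := le_max_right _ _
  have hM₁' : ∀ z ∈ uD, (1 - ‖z‖ ^ 2) ^ β * ‖g z * deriv φ z‖ / (1 - ‖φ z‖ ^ 2) ^ (1:ℝ) ≤ M₁ :=
    fun z hz => le_trans (hM₁ z hz) (le_max_left _ _)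
  have hM₂' : ∀ z ∈ uD, (1 - ‖z‖ ^ 2) ^ β * Real.log (2 / (1 - ‖φ z‖ ^ 2)) * ‖deriv g z‖ ≤ M₂ :=
    fun z hz => le_trans (hM₂ z hz) (le_max_left _ _)
  set c₁ : ℝ := 1 + 1/Real.log 2 with hc₁def
  have hlog2 : (0:ℝ) < Real.log 2 := Real.log_pos (by norm_num)
  have hc₁0 : 0 < c₁ := by rw [hc₁def]; positivity
  set c₂ : ℝ := c₁ * Real.log (2 / (1 - ‖φ 0‖ ^ 2)) * ‖g 0‖ with hc₂def
  have hφ0 : φ 0 ∈ uD := hφm zero_mem_uD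
  have hc₂0 : 0 ≤ c₂ := by
    rw [hc₂def]
    have := (s_pos hφ0).le
    positivity
  -- the key pointwise bound
  have key : ∀ f, memZ 1 f → ∀ z ∈ uD,
      zygS β (VgCphi g φ f) z ≤ (M₁ + c₁ * M₂) * zNorm 1 f := by
    intro f hf z hz
    have hfa := hf.aonhd
    set N := zNorm 1 f with hNdef
    have hN : 0 ≤ N := zNorm_nonneg hf
    have hφz : φ z ∈ uD := hφm hz
    have hzpos : (0:ℝ) < 1 - ‖z‖^2 := one_sub_sq_pos hz
    have hφzpos : (0:ℝ) < 1 - ‖φ z‖^2 := one_sub_sq_pos hφz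
    have hrpow : (0:ℝ) ≤ (1 - ‖z‖^2) ^ β := Real.rpow_nonneg hzpos.le β
    unfold zygS
    rw [deriv2_T hφ hφm hg hfa hz]
    have hbd2 : ‖deriv (deriv f) (φ z)‖ * (1 - ‖φ z‖^2) ≤ N := by
      rw [mul_comm]; exact second_deriv_bound hf hφz
    have hbd1 : ‖deriv f (φ z)‖ ≤ c₁ * N * Real.log (2 / (1 - ‖φ z‖ ^ 2)) := by
      have := first_deriv_bound hf hφz
      rw [hc₁def]
      calc ‖deriv f (φ z)‖ ≤ (1 + 1/Real.log 2) * N * Real.log (2 / (1 - ‖φ z‖ ^ 2)) := this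
        _ = _ := by ring
    calc (1 - ‖z‖ ^ 2) ^ β * ‖deriv (deriv f) (φ z) * deriv φ z * g z + deriv f (φ z) * deriv g z‖
        ≤ (1 - ‖z‖ ^ 2) ^ β * (‖deriv (deriv f) (φ z) * deriv φ z * g z‖ +
            ‖deriv f (φ z) * deriv g z‖) := by
          gcongr
          exact norm_add_le _ _
      _ = (1 - ‖z‖ ^ 2) ^ β * ‖g z * deriv φ z‖ * ‖deriv (deriv f) (φ z)‖ +
          (1 - ‖z‖ ^ 2) ^ β * ‖deriv f (φ z)‖ * ‖deriv g z‖ := by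
          rw [norm_mul, norm_mul, norm_mul, norm_mul]
          ring
      _ ≤ (1 - ‖z‖ ^ 2) ^ β * ‖g z * deriv φ z‖ * (N / (1 - ‖φ z‖^2)) +
          (1 - ‖z‖ ^ 2) ^ β * (c₁ * N * Real.log (2 / (1 - ‖φ z‖ ^ 2))) * ‖deriv g z‖ := by
          apply add_le_add
          · apply mul_le_mul_of_nonneg_left _ (by positivity)
            rw [le_div_iff₀ hφzpos]; exact hbd2
          · apply mul_le_mul_of_nonneg_right _ (norm_nonneg _)
            exact mul_le_mul_of_nonneg_left hbd1 hrpow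
      _ = ((1 - ‖z‖ ^ 2) ^ β * ‖g z * deriv φ z‖ / (1 - ‖φ z‖^2) ^ (1:ℝ)) * N +
          ((1 - ‖z‖ ^ 2) ^ β * Real.log (2 / (1 - ‖φ z‖ ^ 2)) * ‖deriv g z‖) * (c₁ * N) := by
          rw [Real.rpow_one]
          ring
      _ ≤ M₁ * N + M₂ * (c₁ * N) := by
          apply add_le_add
          · exact mul_le_mul_of_nonneg_right (hM₁' z hz) hN
          · exact mul_le_mul_of_nonneg_right (hM₂' z hz) (by positivity)
      _ = (M₁ + c₁ * M₂) * N := by ring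
  constructor
  · -- maps into Z^β
    intro f hf
    refine ⟨(T_aonhd hφ hφm hg hf.aonhd).analyticOn, (M₁ + c₁ * M₂) * zNorm 1 f, key f hf⟩
  · -- norm bound
    refine ⟨c₂ + M₁ + c₁ * M₂ + 1, by positivity, ?_⟩
    intro f hf
    set N := zNorm 1 f with hNdef
    have hN : 0 ≤ N := zNorm_nonneg hf
    have hT0 : VgCphi g φ f 0 = 0 := T_zero f
    have hdT0 : deriv (VgCphi g φ f) 0 = deriv f (φ 0) * g 0 :=
      deriv_T hφ hφm hg hf.aonhd zero_mem_uD
    have hd0bd : ‖deriv (VgCphi g φ f) 0‖ ≤ c₂ * N := by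
      rw [hdT0, norm_mul, hc₂def]
      calc ‖deriv f (φ 0)‖ * ‖g 0‖
          ≤ ((1 + 1/Real.log 2) * N * Real.log (2 / (1 - ‖φ 0‖ ^ 2))) * ‖g 0‖ := by
            gcongr
            exact first_deriv_bound hf hφ0
        _ = c₁ * Real.log (2 / (1 - ‖φ 0‖ ^ 2)) * ‖g 0‖ * N := by rw [hc₁def]; ring
    have hsup : sSup (zygS β (VgCphi g φ f) '' uD) ≤ (M₁ + c₁ * M₂) * N := by
      apply sSup_zygS_le (by positivity)
      exact key f hf
    unfold zNorm
    rw [hT0]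
    simp only [norm_zero]
    calc (0:ℝ) + ‖deriv (VgCphi g φ f) 0‖ + sSup (zygS β (VgCphi g φ f) '' uD)
        ≤ 0 + c₂ * N + (M₁ + c₁ * M₂) * N := add_le_add (add_le_add le_rfl hd0bd) hsup
      _ ≤ (c₂ + M₁ + c₁ * M₂ + 1) * N := by nlinarith

/-! Test functions for the necessity direction. -/

section tests

def uu (w z : ℂ) : ℂ := 1 - (starRingEnd ℂ) w * z

def LL (w z : ℂ) : ℂ := ((Real.log 2 : ℝ) : ℂ) - Complex.log (uu w z)

def sw (w : ℂ) : ℝ := Real.log (2 / (1 - ‖w‖ ^ 2))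

def F3 (w z : ℂ) : ℂ :=
  -((uu w z) * (LL w z) + uu w z - (1 + ((Real.log 2 : ℝ) : ℂ))) / (starRingEnd ℂ) w

def KK (w : ℂ) : ℂ :=
  ((((Real.log 2)^2 + 2*Real.log 2 + 2) / sw w : ℝ) : ℂ) - ((Real.log 2 : ℝ) : ℂ) - 1

def F4 (w z : ℂ) : ℂ :=
  (-((uu w z) * ((LL w z)^2 + 2*(LL w z) + 2)) / ((sw w : ℝ) : ℂ)
    + (uu w z) * (LL w z) + uu w z + KK w) / (starRingEnd ℂ) w

variable {w : ℂ}

lemma norm_cwz_lt (hw : w ∈ uD) {z : ℂ} (hz : z ∈ uD) : ‖(starRingEnd ℂ) w * z‖ < 1 := by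
  rw [norm_mul, RCLike.norm_conj]
  rw [mem_uD] at hw hz
  nlinarith [norm_nonneg w, norm_nonneg z]

lemma uu_slit (hw : w ∈ uD) {z : ℂ} (hz : z ∈ uD) : uu w z ∈ Complex.slitPlane := by
  rw [Complex.mem_slitPlane_iff]
  left
  have h := norm_cwz_lt hw hz
  have h2 : ((starRingEnd ℂ) w * z).re ≤ ‖(starRingEnd ℂ) w * z‖ := Complex.re_le_norm _
  unfold uu
  simp only [Complex.sub_re, Complex.one_re]
  linarith

lemma uu_ne (hw : w ∈ uD) {z : ℂ} (hz : z ∈ uD) : uu w z ≠ 0 :=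
  Complex.slitPlane_ne_zero (uu_slit hw hz)

lemma norm_uu_le (hw : w ∈ uD) {z : ℂ} (hz : z ∈ uD) : ‖uu w z‖ ≤ 2 := by
  unfold uu
  calc ‖1 - (starRingEnd ℂ) w * z‖ ≤ ‖(1:ℂ)‖ + ‖(starRingEnd ℂ) w * z‖ := norm_sub_le _ _
    _ ≤ 2 := by
        have := (norm_cwz_lt hw hz).le
        simp only [norm_one]
        linarith

lemma norm_uu_ge (hw : w ∈ uD) {z : ℂ} (hz : z ∈ uD) :
    1 - ‖w‖ * ‖z‖ ≤ ‖uu w z‖ := by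
  unfold uu
  have := norm_sub_norm_le (1:ℂ) ((starRingEnd ℂ) w * z)
  rw [norm_one, norm_mul, RCLike.norm_conj] at this
  linarith

lemma norm_uu_pos (hw : w ∈ uD) {z : ℂ} (hz : z ∈ uD) : 0 < ‖uu w z‖ :=
  norm_pos_iff.mpr (uu_ne hw hz)

lemma hasDerivAt_uu (z : ℂ) : HasDerivAt (uu w) (-(starRingEnd ℂ) w) z := by
  unfold uu
  simpa using ((hasDerivAt_id z).const_mul ((starRingEnd ℂ) w)).const_sub 1

lemma hasDerivAt_LL (hw : w ∈ uD) {z : ℂ} (hz : z ∈ uD) :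
    HasDerivAt (LL w) ((starRingEnd ℂ) w / uu w z) z := by
  have hlog := (Complex.hasDerivAt_log (uu_slit hw hz)).comp z (hasDerivAt_uu z)
  have := hlog.const_sub (((Real.log 2 : ℝ) : ℂ))
  refine this.congr_deriv (Eq.symm ?_)
  ring

lemma wt_bound (hw : w ∈ uD) {z : ℂ} (hz : z ∈ uD) :
    (1 - ‖z‖^2) * ‖(starRingEnd ℂ) w / uu w z‖ ≤ 2 := by
  rw [norm_div, RCLike.norm_conj]
  have hu := norm_uu_pos hw hz
  have hge := norm_uu_ge hw hz
  rw [mem_uD] at hw hz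
  rw [div_eq_mul_inv, ← mul_assoc, ← div_eq_mul_inv, div_le_iff₀ hu]
  nlinarith [norm_nonneg w, norm_nonneg z, sq_nonneg (‖z‖ - 1), hw.le]

lemma sw_pos (hw : w ∈ uD) : 0 < sw w := s_pos hw

lemma log_two_le_sw (hw : w ∈ uD) : Real.log 2 ≤ sw w := log_two_le_s hw

lemma sw_eq (hw : w ∈ uD) : sw w = Real.log 2 - Real.log (1 - ‖w‖^2) := by
  unfold sw
  rw [Real.log_div (by norm_num) (ne_of_gt (one_sub_sq_pos hw))]

lemma norm_LL_le (hw : w ∈ uD) {z : ℂ} (hz : z ∈ uD) :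
    ‖LL w z‖ ≤ 2*Real.log 2 + Real.pi + sw w := by
  have hlog2 : (0:ℝ) < Real.log 2 := Real.log_pos (by norm_num)
  have hu := norm_uu_pos hw hz
  have hule := norm_uu_le hw hz
  have huge : 1 - ‖w‖ ≤ ‖uu w z‖ := by
    have := norm_uu_ge hw hz
    have hz1 : ‖z‖ < 1 := mem_uD.mp hz
    nlinarith [norm_nonneg w, norm_nonneg z]
  have hw1 : ‖w‖ < 1 := mem_uD.mp hw
  have habs : ‖Complex.log (uu w z)‖ ≤ |Real.log ‖uu w z‖| + Real.pi := by
    calc ‖Complex.log (uu w z)‖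
        ≤ |(Complex.log (uu w z)).re| + |(Complex.log (uu w z)).im| :=
          Complex.norm_le_abs_re_add_abs_im _
      _ ≤ |Real.log ‖uu w z‖| + Real.pi := by
          rw [Complex.log_re, Complex.log_im]
          gcongr
          exact abs_le.mpr ⟨(Complex.neg_pi_lt_arg (uu w z)).le, Complex.arg_le_pi _⟩
  have hlogu : |Real.log ‖uu w z‖| ≤ Real.log 2 + sw w := by
    rw [abs_le]
    constructor
    · -- lower bound
      have h1 : Real.log (1 - ‖w‖) ≤ Real.log ‖uu w z‖ :=
        Real.log_le_log (by linarith) huge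
      have h2 : -(sw w) ≤ Real.log (1 - ‖w‖) := by
        rw [sw_eq hw]
        have hfac : 1 - ‖w‖^2 = (1-‖w‖)*(1+‖w‖) := by ring
        have hp1 : (0:ℝ) < 1 - ‖w‖ := by linarith
        have hp2 : (0:ℝ) < 1 + ‖w‖ := by linarith [norm_nonneg w]
        rw [hfac, Real.log_mul (ne_of_gt hp1) (ne_of_gt hp2)]
        have : Real.log (1+‖w‖) ≤ Real.log 2 := Real.log_le_log hp2 (by linarith)
        linarith
      linarith
    · -- upper bound
      have h1 : Real.log ‖uu w z‖ ≤ Real.log 2 := Real.log_le_log hu hule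
      linarith [(sw_pos hw).le]
  unfold LL
  calc ‖((Real.log 2 : ℝ) : ℂ) - Complex.log (uu w z)‖
      ≤ ‖((Real.log 2 : ℝ) : ℂ)‖ + ‖Complex.log (uu w z)‖ := norm_sub_le _ _
    _ ≤ Real.log 2 + (|Real.log ‖uu w z‖| + Real.pi) := by
        rw [Complex.norm_real, Real.norm_eq_abs, abs_of_nonneg hlog2.le]
        gcongr
    _ ≤ 2*Real.log 2 + Real.pi + sw w := by linarith

/-- The absolute constant `c₀` with `‖L_w(z)‖ ≤ c₀ · s_w`. -/
def cc0 : ℝ := (2*Real.log 2 + Real.pi)/Real.log 2 + 1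

lemma cc0_pos : 0 < cc0 := by
  unfold cc0
  have hlog2 : (0:ℝ) < Real.log 2 := Real.log_pos (by norm_num)
  have := Real.pi_pos
  positivity

lemma norm_LL_le' (hw : w ∈ uD) {z : ℂ} (hz : z ∈ uD) : ‖LL w z‖ ≤ cc0 * sw w := by
  have h := norm_LL_le hw hz
  have hlog2 : (0:ℝ) < Real.log 2 := Real.log_pos (by norm_num)
  have hsw := sw_pos hw
  have hsw2 := log_two_le_sw hw
  have hpi := Real.pi_pos
  unfold cc0
  have h2 : 2*Real.log 2 + Real.pi ≤ ((2*Real.log 2 + Real.pi)/Real.log 2) * sw w := by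
    rw [div_mul_eq_mul_div, le_div_iff₀ hlog2]
    nlinarith
  nlinarith

lemma LL_at_w (hw : w ∈ uD) : LL w w = ((sw w : ℝ) : ℂ) := by
  have h1 : (starRingEnd ℂ) w * w = ((‖w‖^2 : ℝ) : ℂ) := by
    rw [mul_comm, Complex.mul_conj]
    norm_cast
    rw [Complex.normSq_eq_norm_sq]
  have h2 : uu w w = (((1 - ‖w‖^2 : ℝ)) : ℂ) := by
    unfold uu
    rw [h1]
    push_cast
    ring
  unfold LL
  rw [h2, ← Complex.ofReal_log (one_sub_sq_pos hw).le, sw_eq hw]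
  push_cast
  ring

end tests

section tests2

variable {w : ℂ}

lemma conj_ne_zero (hw0 : w ≠ 0) : (starRingEnd ℂ) w ≠ 0 := by
  simpa using hw0

lemma sw_ne (hw : w ∈ uD) : ((sw w : ℝ) : ℂ) ≠ 0 :=
  Complex.ofReal_ne_zero.mpr (ne_of_gt (sw_pos hw))

lemma uu_at_w (hw : w ∈ uD) : uu w w = (((1 - ‖w‖^2 : ℝ)) : ℂ) := by
  have h1 : (starRingEnd ℂ) w * w = ((‖w‖^2 : ℝ) : ℂ) := by
    rw [mul_comm, Complex.mul_conj]
    norm_cast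
    rw [Complex.normSq_eq_norm_sq]
  unfold uu
  rw [h1]
  push_cast
  ring

lemma LL_zero : LL w 0 = ((Real.log 2 : ℝ) : ℂ) := by
  unfold LL uu
  simp

lemma hasDerivAt_F3 (hw : w ∈ uD) (hw0 : w ≠ 0) {z : ℂ} (hz : z ∈ uD) :
    HasDerivAt (F3 w) (LL w z) z := by
  have hc0 := conj_ne_zero hw0
  have hu := uu_ne hw hz
  have h1 := (hasDerivAt_uu (w:=w) z).mul (hasDerivAt_LL hw hz)
  have h2 := (h1.add (hasDerivAt_uu (w:=w) z)).sub_const (1 + ((Real.log 2 : ℝ) : ℂ))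
  have h3 := h2.neg.div_const ((starRingEnd ℂ) w)
  unfold F3
  refine h3.congr_deriv (Eq.symm ?_)
  field_simp
  ring

lemma F3_zero (hw0 : w ≠ 0) : F3 w 0 = 0 := by
  have h1 : uu w 0 = 1 := by unfold uu; ring
  unfold F3
  rw [h1]
  unfold LL
  rw [h1, Complex.log_one]
  have : -((1:ℂ) * (((Real.log 2 : ℝ) : ℂ) - 0) + 1 - (1 + ((Real.log 2 : ℝ) : ℂ))) = 0 := by ring
  rw [this, zero_div]

lemma memZ_F3 (hw : w ∈ uD) (hw0 : w ≠ 0) : memZ 1 (F3 w) := by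
  apply memZ_of (p := LL w) (q := fun z => (starRingEnd ℂ) w / uu w z) (M := 2)
  · exact fun z hz => hasDerivAt_F3 hw hw0 hz
  · exact fun z hz => hasDerivAt_LL hw hz
  · intro z hz
    rw [Real.rpow_one]
    exact wt_bound hw hz

lemma zNorm_F3_le (hw : w ∈ uD) (hw0 : w ≠ 0) : zNorm 1 (F3 w) ≤ Real.log 2 + 2 := by
  have h := zNorm_le_of (p := LL w) (q := fun z => (starRingEnd ℂ) w / uu w z) (M := 2)
    (fun z hz => hasDerivAt_F3 hw hw0 hz) (fun z hz => hasDerivAt_LL hw hz)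
    (fun z hz => by rw [Real.rpow_one]; exact wt_bound hw hz) (by norm_num)
  rw [F3_zero hw0, norm_zero, LL_zero] at h
  rw [Complex.norm_real, Real.norm_eq_abs, abs_of_nonneg (Real.log_pos (by norm_num)).le] at h
  linarith

lemma hasDerivAt_F4 (hw : w ∈ uD) (hw0 : w ≠ 0) {z : ℂ} (hz : z ∈ uD) :
    HasDerivAt (F4 w) ((LL w z)^2/((sw w : ℝ) : ℂ) - LL w z) z := by
  have hc0 := conj_ne_zero hw0
  have hu := uu_ne hw hz
  have hs := sw_ne hw
  have hL := hasDerivAt_LL hw hz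
  have hL2 := (((hL.pow 2).add (hL.const_mul 2)).add_const (2:ℂ))
  have hbig := ((hasDerivAt_uu (w:=w) z).mul hL2).neg.div_const ((sw w : ℝ) : ℂ)
  have hmid := (hasDerivAt_uu (w:=w) z).mul hL
  have htot := (((hbig.add hmid).add (hasDerivAt_uu (w:=w) z)).add_const (KK w)).div_const
    ((starRingEnd ℂ) w)
  unfold F4
  refine htot.congr_deriv (Eq.symm ?_)
  field_simp
  simp only [Pi.add_apply, Pi.pow_apply]
  ring

lemma hasDerivAt_F4' (hw : w ∈ uD) {z : ℂ} (hz : z ∈ uD) :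
    HasDerivAt (fun z => (LL w z)^2/((sw w : ℝ) : ℂ) - LL w z)
      ((2*LL w z/((sw w : ℝ) : ℂ) - 1) * ((starRingEnd ℂ) w / uu w z)) z := by
  have hu := uu_ne hw hz
  have hs := sw_ne hw
  have hL := hasDerivAt_LL hw hz
  have := ((hL.pow 2).div_const ((sw w : ℝ) : ℂ)).sub hL
  refine this.congr_deriv (Eq.symm ?_)
  field_simp
  ring

lemma norm_factor_le (hw : w ∈ uD) {z : ℂ} (hz : z ∈ uD) :
    ‖2*LL w z/((sw w : ℝ) : ℂ) - 1‖ ≤ 2*cc0 + 1 := by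
  have hs := sw_pos hw
  calc ‖2*LL w z/((sw w : ℝ) : ℂ) - 1‖ ≤ ‖2*LL w z/((sw w : ℝ) : ℂ)‖ + ‖(1:ℂ)‖ := norm_sub_le _ _
    _ = 2*‖LL w z‖/(sw w) + 1 := by
        rw [norm_div, norm_mul, Complex.norm_real, Real.norm_eq_abs, abs_of_nonneg hs.le,
          norm_one]
        norm_num
    _ ≤ 2*(cc0 * sw w)/(sw w) + 1 := by
        gcongr
        exact norm_LL_le' hw hz
    _ = 2*cc0 + 1 := by field_simp
    
def B4 : ℝ := 2*Real.log 2 + 2*(2*cc0+1)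

lemma F4_bound (hw : w ∈ uD) {z : ℂ} (hz : z ∈ uD) :
    (1 - ‖z‖ ^ 2) ^ (1:ℝ) * ‖(2*LL w z/((sw w : ℝ) : ℂ) - 1) * ((starRingEnd ℂ) w / uu w z)‖
      ≤ 2*(2*cc0+1) := by
  rw [Real.rpow_one, norm_mul]
  have h1 := norm_factor_le hw hz
  have h2 := wt_bound hw hz
  have h3 := one_sub_sq_pos hz
  have h5 := norm_nonneg ((starRingEnd ℂ) w / uu w z)
  have h6 : (0:ℝ) ≤ 2*cc0+1 := by have := cc0_pos; linarith
  calc (1 - ‖z‖ ^ 2) * (‖2*LL w z/((sw w : ℝ) : ℂ) - 1‖ * ‖(starRingEnd ℂ) w / uu w z‖)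
      = ‖2*LL w z/((sw w : ℝ) : ℂ) - 1‖ * ((1 - ‖z‖ ^ 2) * ‖(starRingEnd ℂ) w / uu w z‖) := by
        ring
    _ ≤ (2*cc0+1) * 2 := by
        apply mul_le_mul h1 h2 (by positivity) h6
    _ = 2*(2*cc0+1) := by ring

lemma F4_zero (hw : w ∈ uD) (hw0 : w ≠ 0) : F4 w 0 = 0 := by
  have h1 : uu w 0 = 1 := by unfold uu; ring
  have hs : ((sw w : ℝ) : ℂ) ≠ 0 := sw_ne hw
  unfold F4
  rw [h1]
  unfold LL
  rw [h1, Complex.log_one]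
  unfold KK
  rw [div_eq_iff (conj_ne_zero hw0), zero_mul]
  push_cast
  field_simp
  ring

lemma memZ_F4 (hw : w ∈ uD) (hw0 : w ≠ 0) : memZ 1 (F4 w) := by
  apply memZ_of (p := fun z => (LL w z)^2/((sw w : ℝ) : ℂ) - LL w z)
    (q := fun z => (2*LL w z/((sw w : ℝ) : ℂ) - 1) * ((starRingEnd ℂ) w / uu w z))
    (M := 2*(2*cc0+1))
  · exact fun z hz => hasDerivAt_F4 hw hw0 hz
  · exact fun z hz => hasDerivAt_F4' hw hz
  · exact fun z hz => F4_bound hw hz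

lemma zNorm_F4_le (hw : w ∈ uD) (hw0 : w ≠ 0) : zNorm 1 (F4 w) ≤ B4 := by
  have h := zNorm_le_of (p := fun z => (LL w z)^2/((sw w : ℝ) : ℂ) - LL w z)
    (q := fun z => (2*LL w z/((sw w : ℝ) : ℂ) - 1) * ((starRingEnd ℂ) w / uu w z))
    (M := 2*(2*cc0+1))
    (fun z hz => hasDerivAt_F4 hw hw0 hz) (fun z hz => hasDerivAt_F4' hw hz)
    (fun z hz => F4_bound hw hz) (by have := cc0_pos; linarith)
  rw [F4_zero hw hw0, norm_zero] at h
  have hlog2 : (0:ℝ) < Real.log 2 := Real.log_pos (by norm_num)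
  have hs := sw_pos hw
  have hs2 := log_two_le_sw hw
  have hval : ‖(LL w 0)^2/((sw w : ℝ) : ℂ) - LL w 0‖ ≤ 2*Real.log 2 := by
    rw [LL_zero]
    calc ‖(((Real.log 2 : ℝ) : ℂ))^2/((sw w : ℝ) : ℂ) - ((Real.log 2 : ℝ) : ℂ)‖
        ≤ ‖(((Real.log 2 : ℝ) : ℂ))^2/((sw w : ℝ) : ℂ)‖ + ‖((Real.log 2 : ℝ) : ℂ)‖ :=
          norm_sub_le _ _
      _ = (Real.log 2)^2/(sw w) + Real.log 2 := by
          rw [norm_div, ← Complex.ofReal_pow, Complex.norm_real, Complex.norm_real]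
          simp [Real.norm_eq_abs, abs_of_nonneg hlog2.le, abs_of_nonneg hs.le,
            abs_of_nonneg (sq_nonneg (Real.log 2))]
          have hcl : Complex.log 2 = ((Real.log 2 : ℝ) : ℂ) := by
            rw [show (2:ℂ) = ((2:ℝ):ℂ) by norm_num, ← Complex.ofReal_log (by norm_num : (0:ℝ) ≤ 2)]
          rw [hcl, Complex.norm_real, Real.norm_eq_abs, abs_of_nonneg hlog2.le]
      _ ≤ 2*Real.log 2 := by
          have : (Real.log 2)^2/(sw w) ≤ Real.log 2 := by
            rw [div_le_iff₀ hs]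
            nlinarith
          linarith
  unfold B4
  linarith

end tests2

/-! The necessity direction. -/

lemma forward {β : ℝ} (hβ : 0 < β) {φ g : ℂ → ℂ}
    (hφ : AnalyticOnNhd ℂ φ uD) (hφm : Set.MapsTo φ uD uD) (hg : AnalyticOnNhd ℂ g uD)
    (hb : boundedOp 1 β (VgCphi g φ)) :
    (∃ M : ℝ, ∀ z ∈ uD, (1 - ‖z‖ ^ 2) ^ β * ‖g z * deriv φ z‖ / (1 - ‖φ z‖ ^ 2) ^ (1:ℝ) ≤ M) ∧
    (∃ M : ℝ, ∀ z ∈ uD, (1 - ‖z‖ ^ 2) ^ β * Real.log (2 / (1 - ‖φ z‖ ^ 2)) * ‖deriv g z‖ ≤ M) := by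
  obtain ⟨hmem, C, hC, hbnd⟩ := hb
  have E : ∀ f, memZ 1 f → ∀ a ∈ uD,
      (1 - ‖a‖ ^ 2) ^ β * ‖deriv (deriv f) (φ a) * deriv φ a * g a + deriv f (φ a) * deriv g a‖
        ≤ C * zNorm 1 f := by
    intro f hf a ha
    have h := zygS_le_zNorm (hmem f hf) (z := a) ha
    unfold zygS at h
    rw [deriv2_T hφ hφm hg hf.aonhd ha] at h
    exact h.trans (hbnd f hf)
  -- Test with the identity
  have hid1 : ∀ z ∈ uD, HasDerivAt (fun z : ℂ => z) ((fun _ : ℂ => (1:ℂ)) z) z :=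
    fun z _ => hasDerivAt_id z
  have hid2 : ∀ z ∈ uD, HasDerivAt (fun _ : ℂ => (1:ℂ)) ((fun _ : ℂ => (0:ℂ)) z) z :=
    fun z _ => hasDerivAt_const z 1
  have hidM : ∀ z ∈ uD, (1 - ‖z‖ ^ 2) ^ (1:ℝ) * ‖(fun _ : ℂ => (0:ℂ)) z‖ ≤ 0 := by
    intro z hz; simp
  have hmemid : memZ 1 (fun z : ℂ => z) := memZ_of hid1 hid2 hidM
  have hznid : zNorm 1 (fun z : ℂ => z) ≤ 1 := by
    have := zNorm_le_of hid1 hid2 hidM le_rfl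
    simpa using this
  have E₀ : ∀ a ∈ uD, (1 - ‖a‖ ^ 2) ^ β * ‖deriv g a‖ ≤ C := by
    intro a ha
    have h := E _ hmemid a ha
    rw [deriv2_eq_on hid1 hid2 (hφm ha), (hid1 _ (hφm ha)).deriv] at h
    simp only [zero_mul, one_mul, zero_add] at h
    calc (1 - ‖a‖ ^ 2) ^ β * ‖deriv g a‖ ≤ C * zNorm 1 (fun z : ℂ => z) := h
      _ ≤ C * 1 := by exact mul_le_mul_of_nonneg_left hznid hC.le
      _ = C := mul_one C
  -- Test with z²/2
  have h21 : ∀ z ∈ uD, HasDerivAt (fun z : ℂ => z^2/2) ((fun z : ℂ => z) z) z := by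
    intro z _
    have h := (hasDerivAt_pow 2 z).div_const 2
    refine h.congr_deriv (Eq.symm ?_)
    simp
  have h22 : ∀ z ∈ uD, HasDerivAt (fun z : ℂ => z) ((fun _ : ℂ => (1:ℂ)) z) z :=
    fun z _ => hasDerivAt_id z
  have h2M : ∀ z ∈ uD, (1 - ‖z‖ ^ 2) ^ (1:ℝ) * ‖(fun _ : ℂ => (1:ℂ)) z‖ ≤ 1 := by
    intro z hz
    rw [Real.rpow_one]
    simp only [norm_one, mul_one]
    nlinarith [sq_nonneg ‖z‖]
  have hmem2 : memZ 1 (fun z : ℂ => z^2/2) := memZ_of h21 h22 h2M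
  have hzn2 : zNorm 1 (fun z : ℂ => z^2/2) ≤ 1 := by
    have := zNorm_le_of h21 h22 h2M (by norm_num)
    simpa using this
  have E₁ : ∀ a ∈ uD, (1 - ‖a‖ ^ 2) ^ β * ‖deriv φ a * g a + φ a * deriv g a‖ ≤ C := by
    intro a ha
    have h := E _ hmem2 a ha
    rw [deriv2_eq_on h21 h22 (hφm ha), (h21 _ (hφm ha)).deriv] at h
    simp only [one_mul] at h
    calc (1 - ‖a‖ ^ 2) ^ β * ‖deriv φ a * g a + φ a * deriv g a‖
        ≤ C * zNorm 1 (fun z : ℂ => z^2/2) := h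
      _ ≤ C * 1 := mul_le_mul_of_nonneg_left hzn2 hC.le
      _ = C := mul_one C
  have hB4 : 0 < B4 := by
    unfold B4
    have := cc0_pos
    have : (0:ℝ) < Real.log 2 := Real.log_pos (by norm_num)
    have := cc0_pos
    nlinarith [cc0_pos]
  -- Condition 1
  have cond1 : ∀ a ∈ uD, (1 - ‖a‖ ^ 2) ^ β * ‖g a * deriv φ a‖ / (1 - ‖φ a‖ ^ 2) ^ (1:ℝ)
      ≤ 4*C + 2*C*B4 := by
    intro a ha
    have hw : φ a ∈ uD := hφm ha
    have hwpos : (0:ℝ) < 1 - ‖φ a‖^2 := one_sub_sq_pos hw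
    have hA : (0:ℝ) ≤ (1 - ‖a‖^2)^β := Real.rpow_nonneg (one_sub_sq_pos ha).le β
    have hPcomm : ‖g a * deriv φ a‖ = ‖deriv φ a * g a‖ := by rw [mul_comm]
    rw [Real.rpow_one, hPcomm]
    by_cases hcase : ‖φ a‖ < 1/2
    · -- φ a near the centre
      have hE0 := E₀ a ha
      have hE1 := E₁ a ha
      have hsplit : ‖deriv φ a * g a‖
          ≤ ‖deriv φ a * g a + φ a * deriv g a‖ + ‖φ a‖ * ‖deriv g a‖ := by
        calc ‖deriv φ a * g a‖
            = ‖(deriv φ a * g a + φ a * deriv g a) - φ a * deriv g a‖ := by ring_nf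
          _ ≤ ‖deriv φ a * g a + φ a * deriv g a‖ + ‖φ a * deriv g a‖ := norm_sub_le _ _
          _ = ‖deriv φ a * g a + φ a * deriv g a‖ + ‖φ a‖ * ‖deriv g a‖ := by rw [norm_mul]
      have hφa1 : ‖φ a‖ ≤ 1 := (mem_uD.mp hw).le
      have hX : (1 - ‖a‖^2)^β * ‖deriv φ a * g a‖ ≤ 2*C := by
        calc (1 - ‖a‖^2)^β * ‖deriv φ a * g a‖
            ≤ (1 - ‖a‖^2)^β * (‖deriv φ a * g a + φ a * deriv g a‖ + ‖φ a‖ * ‖deriv g a‖) :=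
              mul_le_mul_of_nonneg_left hsplit hA
          _ = (1 - ‖a‖^2)^β * ‖deriv φ a * g a + φ a * deriv g a‖ +
              ‖φ a‖ * ((1 - ‖a‖^2)^β * ‖deriv g a‖) := by ring
          _ ≤ C + 1 * C := by
              apply add_le_add hE1
              apply mul_le_mul hφa1 hE0 (by positivity) (by norm_num)
          _ = 2*C := by ring
      have hd : (1:ℝ)/2 ≤ 1 - ‖φ a‖^2 := by nlinarith [norm_nonneg (φ a)]
      rw [div_le_iff₀ hwpos]
      have hCpos := hC.le
      nlinarith [mul_nonneg hA (norm_nonneg (deriv φ a * g a)), mul_pos hC hB4]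
    · -- φ a away from the centre: use F4
      push_neg at hcase
      set w := φ a with hwdef
      have hw0 : w ≠ 0 := by
        intro h0
        rw [h0] at hcase
        simp at hcase
        linarith
      have h := E _ (memZ_F4 hw hw0) a ha
      rw [deriv2_eq_on (fun z hz => hasDerivAt_F4 hw hw0 hz)
            (fun z hz => hasDerivAt_F4' hw hz) hw,
          (hasDerivAt_F4 hw hw0 hw).deriv] at h
      have hLw : LL w w = ((sw w : ℝ) : ℂ) := LL_at_w hw
      have hs := sw_ne hw
      have hval1 : (LL w w)^2/((sw w : ℝ) : ℂ) - LL w w = 0 := by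
        rw [hLw]; field_simp; ring
      have hd : ((1 - ‖w‖^2 : ℝ) : ℂ) ≠ 0 := by
        exact_mod_cast ne_of_gt hwpos
      have hval2 : (2*LL w w/((sw w : ℝ) : ℂ) - 1) * ((starRingEnd ℂ) w / uu w w)
          = (starRingEnd ℂ) w / ((1 - ‖w‖^2 : ℝ) : ℂ) := by
        rw [hLw, uu_at_w hw]
        field_simp
        ring
      rw [hval1, hval2, zero_mul, add_zero] at h
      have hnorm : ‖(starRingEnd ℂ) w / ((1 - ‖w‖^2 : ℝ) : ℂ) * deriv φ a * g a‖
          = ‖w‖ / (1 - ‖w‖^2) * ‖deriv φ a * g a‖ := by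
        rw [norm_mul, norm_mul, norm_div, RCLike.norm_conj, Complex.norm_real,
          Real.norm_eq_abs, abs_of_pos hwpos, norm_mul (deriv φ a) (g a)]
        ring
      rw [hnorm] at h
      have h2 : (1 - ‖a‖^2)^β * (‖w‖ / (1 - ‖w‖^2) * ‖deriv φ a * g a‖) ≤ C * B4 :=
        h.trans (mul_le_mul_of_nonneg_left (zNorm_F4_le hw hw0) hC.le)
      rw [div_le_iff₀ hwpos]
      have hP := norm_nonneg (deriv φ a * g a)
      have h2' : (1 - ‖a‖^2)^β * (‖w‖ * ‖deriv φ a * g a‖) ≤ C * B4 * (1 - ‖w‖^2) := by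
        have hh := mul_le_mul_of_nonneg_right h2 hwpos.le
        calc (1 - ‖a‖^2)^β * (‖w‖ * ‖deriv φ a * g a‖)
            = (1 - ‖a‖^2)^β * (‖w‖/(1 - ‖w‖^2) * ‖deriv φ a * g a‖) * (1 - ‖w‖^2) := by
              field_simp
          _ ≤ C * B4 * (1 - ‖w‖^2) := hh
      have k1 : 0 ≤ (1 - ‖a‖^2)^β * ‖deriv φ a * g a‖ * (2*‖w‖ - 1) :=
        mul_nonneg (mul_nonneg hA hP) (by linarith)
      have k2 : 0 ≤ C * (1 - ‖w‖^2) := mul_nonneg hC.le hwpos.le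
      nlinarith [h2', k1, k2]
  -- Condition 2
  have cond2 : ∀ a ∈ uD, (1 - ‖a‖ ^ 2) ^ β * Real.log (2 / (1 - ‖φ a‖ ^ 2)) * ‖deriv g a‖
      ≤ 2*Real.log 2*C + (C*(Real.log 2 + 2) + (4*C + 2*C*B4)) := by
    intro a ha
    have hw : φ a ∈ uD := hφm ha
    have hwpos : (0:ℝ) < 1 - ‖φ a‖^2 := one_sub_sq_pos hw
    have hA : (0:ℝ) ≤ (1 - ‖a‖^2)^β := Real.rpow_nonneg (one_sub_sq_pos ha).le β
    have hspos := s_pos hw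
    have hterm : (0:ℝ) ≤ C*(Real.log 2 + 2) + (4*C + 2*C*B4) := by
      have h1 : (0:ℝ) < Real.log 2 := Real.log_pos (by norm_num)
      nlinarith [hC.le, hB4.le]
    by_cases hcase : ‖φ a‖^2 ≤ 1/2
    · -- small s
      have hsle : Real.log (2 / (1 - ‖φ a‖ ^ 2)) ≤ 2*Real.log 2 := by
        have h4 : 2 / (1 - ‖φ a‖ ^ 2) ≤ 4 := by
          rw [div_le_iff₀ hwpos]
          nlinarith
        calc Real.log (2 / (1 - ‖φ a‖ ^ 2)) ≤ Real.log 4 := Real.log_le_log (by positivity) h4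
          _ = 2*Real.log 2 := by
              rw [show (4:ℝ) = 2^2 by norm_num, Real.log_pow]
              push_cast
              ring
      have hE0 := E₀ a ha
      calc (1 - ‖a‖ ^ 2) ^ β * Real.log (2 / (1 - ‖φ a‖ ^ 2)) * ‖deriv g a‖
          = Real.log (2 / (1 - ‖φ a‖ ^ 2)) * ((1 - ‖a‖ ^ 2) ^ β * ‖deriv g a‖) := by ring
        _ ≤ (2*Real.log 2) * C := by
            apply mul_le_mul hsle hE0 (by positivity) (by positivity)
        _ ≤ _ := by linarith
    · -- big s : use F3
      push_neg at hcase
      set w := φ a with hwdef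
      have hw0 : w ≠ 0 := by
        intro h0
        rw [h0] at hcase
        simp at hcase
        linarith
      have h := E _ (memZ_F3 hw hw0) a ha
      rw [deriv2_eq_on (fun z hz => hasDerivAt_F3 hw hw0 hz)
            (fun z hz => hasDerivAt_LL hw hz) hw,
          (hasDerivAt_F3 hw hw0 hw).deriv] at h
      have hLw : LL w w = ((sw w : ℝ) : ℂ) := LL_at_w hw
      rw [hLw, uu_at_w hw] at h
      have hnorm1 : ‖(starRingEnd ℂ) w / ((1 - ‖w‖^2 : ℝ) : ℂ) * deriv φ a * g a‖
          = ‖w‖ / (1 - ‖w‖^2) * ‖deriv φ a * g a‖ := by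
        rw [norm_mul, norm_mul, norm_div, RCLike.norm_conj, Complex.norm_real,
          Real.norm_eq_abs, abs_of_pos hwpos, norm_mul (deriv φ a) (g a)]
        ring
      -- extract the second term
      have hsecond : ‖((sw w : ℝ) : ℂ) * deriv g a‖ = sw w * ‖deriv g a‖ := by
        rw [norm_mul, Complex.norm_real, Real.norm_eq_abs, abs_of_pos (sw_pos hw)]
      have htri : sw w * ‖deriv g a‖
          ≤ ‖(starRingEnd ℂ) w / ((1 - ‖w‖^2 : ℝ) : ℂ) * deriv φ a * g a
              + ((sw w : ℝ) : ℂ) * deriv g a‖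
            + ‖w‖ / (1 - ‖w‖^2) * ‖deriv φ a * g a‖ := by
        rw [← hsecond, ← hnorm1]
        calc ‖((sw w : ℝ) : ℂ) * deriv g a‖
            = ‖((starRingEnd ℂ) w / ((1 - ‖w‖^2 : ℝ) : ℂ) * deriv φ a * g a
                + ((sw w : ℝ) : ℂ) * deriv g a)
              - (starRingEnd ℂ) w / ((1 - ‖w‖^2 : ℝ) : ℂ) * deriv φ a * g a‖ := by ring_nf
          _ ≤ _ := norm_sub_le _ _
      have hc1 := cond1 a ha
      have hB3 := zNorm_F3_le hw hw0
      have hw1 : ‖w‖ ≤ 1 := (mem_uD.mp hw).le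
      have hfrac : (1 - ‖a‖^2)^β * (‖w‖ / (1 - ‖w‖^2) * ‖deriv φ a * g a‖)
          ≤ 4*C + 2*C*B4 := by
        rw [Real.rpow_one] at hc1
        have hPcomm : ‖g a * deriv φ a‖ = ‖deriv φ a * g a‖ := by rw [mul_comm]
        rw [hPcomm] at hc1
        calc (1 - ‖a‖^2)^β * (‖w‖ / (1 - ‖w‖^2) * ‖deriv φ a * g a‖)
            = ‖w‖ * ((1 - ‖a‖^2)^β * ‖deriv φ a * g a‖ / (1 - ‖w‖^2)) := by ring
          _ ≤ 1 * ((1 - ‖a‖^2)^β * ‖deriv φ a * g a‖ / (1 - ‖w‖^2)) := by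
              apply mul_le_mul_of_nonneg_right hw1
              positivity
          _ = (1 - ‖a‖^2)^β * ‖deriv φ a * g a‖ / (1 - ‖w‖^2) := by ring
          _ ≤ 4*C + 2*C*B4 := hc1
      have hmain : (1 - ‖a‖^2)^β * (sw w * ‖deriv g a‖)
          ≤ C * (Real.log 2 + 2) + (4*C + 2*C*B4) := by
        calc (1 - ‖a‖^2)^β * (sw w * ‖deriv g a‖)
            ≤ (1 - ‖a‖^2)^β * (‖(starRingEnd ℂ) w / ((1 - ‖w‖^2 : ℝ) : ℂ) * deriv φ a * g a
                + ((sw w : ℝ) : ℂ) * deriv g a‖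
              + ‖w‖ / (1 - ‖w‖^2) * ‖deriv φ a * g a‖) :=
              mul_le_mul_of_nonneg_left htri hA
          _ = (1 - ‖a‖^2)^β * ‖(starRingEnd ℂ) w / ((1 - ‖w‖^2 : ℝ) : ℂ) * deriv φ a * g a
                + ((sw w : ℝ) : ℂ) * deriv g a‖
              + (1 - ‖a‖^2)^β * (‖w‖ / (1 - ‖w‖^2) * ‖deriv φ a * g a‖) := by ring
          _ ≤ C * zNorm 1 (F3 w) + (4*C + 2*C*B4) := add_le_add h hfrac
          _ ≤ C * (Real.log 2 + 2) + (4*C + 2*C*B4) := by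
              gcongr ?_ + _
              exact mul_le_mul_of_nonneg_left hB3 hC.le
      have hsw : sw w = Real.log (2 / (1 - ‖φ a‖ ^ 2)) := rfl
      calc (1 - ‖a‖ ^ 2) ^ β * Real.log (2 / (1 - ‖φ a‖ ^ 2)) * ‖deriv g a‖
          = (1 - ‖a‖^2)^β * (sw w * ‖deriv g a‖) := by rw [hsw]; ring
        _ ≤ C * (Real.log 2 + 2) + (4*C + 2*C*B4) := hmain
        _ ≤ _ := by
            have h1 : (0:ℝ) < Real.log 2 := Real.log_pos (by norm_num)
            nlinarith [hC.le]
  exact ⟨⟨_, cond1⟩, ⟨_, cond2⟩⟩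

theorem stmt_1 (α β : ℝ) (hα : α = 1) (hβ : 0 < β)
    (φ g : ℂ → ℂ) (hφ : AnalyticOn ℂ φ uD) (hφm : Set.MapsTo φ uD uD)
    (hg : AnalyticOn ℂ g uD) :
    boundedOp 1 β (VgCphi g φ) ↔
      ((∃ M : ℝ, ∀ z ∈ uD, (1 - ‖z‖ ^ 2) ^ β * ‖g z * deriv φ z‖ / (1 - ‖φ z‖ ^ 2) ^ (1:ℝ) ≤ M) ∧ (∃ M : ℝ, ∀ z ∈ uD, (1 - ‖z‖ ^ 2) ^ β * Real.log (2 / (1 - ‖φ z‖ ^ 2)) * ‖deriv g z‖ ≤ M)) := by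
  have hφn : AnalyticOnNhd ℂ φ uD := (uD_open.analyticOn_iff_analyticOnNhd).mp hφ
  have hgn : AnalyticOnNhd ℂ g uD := (uD_open.analyticOn_iff_analyticOnNhd).mp hg
  constructor
  · intro hb
    exact forward hβ hφn hφm hgn hb
  · rintro ⟨h1, h2⟩
    exact backward hβ hφn hφm hgn h1 h2
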